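/- Let n ≥ 1, let A, C, D be real symmetric n×n matrices with A positive definite, and suppose that for every μ ∈ ℝ the matrix μ²A + 2μC + D is positive definite. Then the complex 2n×2n block matrix M = [[0, Iₙ],[A⁻¹D, −2i A⁻¹C]] (real matrices being regarded as complex) has no purely imaginary eigenvalue: there is no μ ∈ ℝ with iμ in the spectrum of M. -/

import Mathlib

open Matrix Polynomial

lemma eval_charpoly_aux {m : Type*} [Fintype m] [DecidableEq m]
    (M : Matrix m m ℂ) (z : ℂ) :
    M.charpoly.eval z = (z • (1 : Matrix m m ℂ) - M).det := by
  rw [Matrix.charpoly, eval_det, matPolyEquiv_charmatrix]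
  congr 1
  simp [Matrix.scalar, smul_eq_diagonal_mul]

/-- if `A, C, D` are real symmetric, `A` positive definite, and
`μ²A + 2μC + D` is positive definite for every real `μ`, then the block matrix
`M = [[0, Iₙ], [A⁻¹D, −2i A⁻¹C]]` (over `ℂ`) has no purely imaginary eigenvalue. -/
theorem statement8 (n : ℕ) (hn : 1 ≤ n) (A C D : Matrix (Fin n) (Fin n) ℝ)
    (hAs : A.IsSymm) (hCs : C.IsSymm) (hDs : D.IsSymm)
    (hA : A.PosDef)
    (hpencil : ∀ μ : ℝ, (μ ^ 2 • A + (2 * μ) • C + D).PosDef) :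
    ¬ ∃ μ : ℝ, (Complex.I * (μ : ℂ)) ∈
      (Matrix.fromBlocks (0 : Matrix (Fin n) (Fin n) ℂ) (1 : Matrix (Fin n) (Fin n) ℂ)
        ((A⁻¹ * D).map (fun x : ℝ => (x : ℂ)))
        ((-2 * Complex.I) • ((A⁻¹ * C).map (fun x : ℝ => (x : ℂ))))).charpoly.roots := by
  rintro ⟨μ, hμ⟩
  set c : ℝ → ℂ := fun x : ℝ => (x : ℂ) with hc
  set M := Matrix.fromBlocks (0 : Matrix (Fin n) (Fin n) ℂ) (1 : Matrix (Fin n) (Fin n) ℂ)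
        ((A⁻¹ * D).map c) ((-2 * Complex.I) • ((A⁻¹ * C).map c)) with hM
  set z : ℂ := Complex.I * (μ : ℂ) with hz
  -- from root of charpoly to eigenvector
  have hroot : M.charpoly.eval z = 0 := by
    have := Polynomial.isRoot_of_mem_roots hμ
    simpa using this
  have hdet : (z • (1 : Matrix (Fin n ⊕ Fin n) (Fin n ⊕ Fin n) ℂ) - M).det = 0 := by
    rw [← eval_charpoly_aux]; exact hroot
  obtain ⟨v, hv0, hv⟩ := (Matrix.exists_mulVec_eq_zero_iff).2 hdet
  have hv' : M.mulVec v = z • v := by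
    have h2 : (z • (1 : Matrix (Fin n ⊕ Fin n) (Fin n ⊕ Fin n) ℂ)).mulVec v
        - M.mulVec v = 0 := by rw [← Matrix.sub_mulVec]; exact hv
    have h3 : (z • (1 : Matrix (Fin n ⊕ Fin n) (Fin n ⊕ Fin n) ℂ)).mulVec v = z • v := by
      rw [Matrix.smul_mulVec, Matrix.one_mulVec]
    rw [h3] at h2
    have := sub_eq_zero.mp h2
    exact this.symm
  set x : Fin n → ℂ := v ∘ Sum.inl with hx
  set y : Fin n → ℂ := v ∘ Sum.inr with hy
  have hvxy : v = Sum.elim x y := by funext i; cases i <;> rfl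
  rw [hvxy, hM, Matrix.fromBlocks_mulVec] at hv'
  have hy_eq : y = z • x := by
    funext i
    have := congrFun hv' (Sum.inl i)
    simpa using this
  have h2 : ((A⁻¹ * D).map c).mulVec x
      + ((-2 * Complex.I) • ((A⁻¹ * C).map c)).mulVec y = z • y := by
    funext i
    have := congrFun hv' (Sum.inr i)
    simpa using this
  rw [hy_eq] at h2
  -- simplify h2 to: (A⁻¹D)x + (2μ)•(A⁻¹C)x = (-(μ²))•x
  have h4 : ((A⁻¹ * D).map c).mulVec x
      + ((2 * μ : ℝ) : ℂ) • ((A⁻¹ * C).map c).mulVec x = (-(μ ^ 2 : ℝ) : ℂ) • x := by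
    have e1 : ((-2 * Complex.I) • ((A⁻¹ * C).map c)).mulVec (z • x)
        = ((2 * μ : ℝ) : ℂ) • ((A⁻¹ * C).map c).mulVec x := by
      rw [Matrix.smul_mulVec, Matrix.mulVec_smul, hz]
      rw [smul_smul]
      congr 1
      push_cast
      ring_nf
      simp [Complex.I_sq]
    have e2 : z • z • x = (-(μ ^ 2 : ℝ) : ℂ) • x := by
      rw [smul_smul, hz]
      congr 1
      push_cast
      ring_nf
      simp [Complex.I_sq]
    rw [e1] at h2
    rw [h2, e2]
  -- multiply by A on the left
  have hAd : IsUnit A.det := hA.det_pos.ne'.isUnit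
  have hmapmul : ∀ (P Q : Matrix (Fin n) (Fin n) ℝ),
      (P.map c) * (Q.map c) = (P * Q).map c := by
    intro P Q
    exact (Matrix.map_mul (f := Complex.ofRealHom)).symm
  have h5 : (D.map c).mulVec x + ((2 * μ : ℝ) : ℂ) • (C.map c).mulVec x
      = (-(μ ^ 2 : ℝ) : ℂ) • (A.map c).mulVec x := by
    have := congrArg (fun w => (A.map c).mulVec w) h4
    simp only [Matrix.mulVec_add, Matrix.mulVec_smul, Matrix.mulVec_mulVec] at this
    rw [hmapmul, hmapmul, Matrix.mul_nonsing_inv_cancel_left _ _ hAd,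
      Matrix.mul_nonsing_inv_cancel_left _ _ hAd] at this
    exact this
  -- the pencil kills x
  have hPx : (((μ ^ 2 • A + (2 * μ) • C + D).map c)).mulVec x = 0 := by
    have hmap : ((μ ^ 2 • A + (2 * μ) • C + D).map c)
        = ((μ ^ 2 : ℝ) : ℂ) • (A.map c) + ((2 * μ : ℝ) : ℂ) • (C.map c) + D.map c := by
      ext i j; simp [hc]
    rw [hmap]
    simp only [Matrix.add_mulVec, Matrix.smul_mulVec]
    have : (-(μ ^ 2 : ℝ) : ℂ) = -((μ ^ 2 : ℝ) : ℂ) := by push_cast; ring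
    rw [this] at h5
    linear_combination (norm := module) h5
  -- x ≠ 0
  have hx0 : x ≠ 0 := by
    intro h
    apply hv0
    rw [hvxy, h, hy_eq, h, smul_zero]
    funext i; cases i <;> rfl
  -- contradiction with positive definiteness
  have hP := hpencil μ
  have hPdet : ((μ ^ 2 • A + (2 * μ) • C + D).map c).det ≠ 0 := by
    have := (RingHom.map_det (Complex.ofRealHom) (μ ^ 2 • A + (2 * μ) • C + D)).symm
    rw [show ((μ ^ 2 • A + (2 * μ) • C + D).map c) = Complex.ofRealHom.mapMatrix (μ ^ 2 • A + (2 * μ) • C + D) from rfl, this]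
    simp only [Complex.ofRealHom_eq_coe, ne_eq, Complex.ofReal_eq_zero]
    exact hP.det_pos.ne'
  exact hPdet ((Matrix.exists_mulVec_eq_zero_iff).1 ⟨x, hx0, hPx⟩)
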